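/- Let p be a real number and suppose x₁, x₂, x₃, x₄ are nonnegative real numbers with ρ(p) = x₁·P₀ + x₂·P₁ + x₃·P₊ + x₄·P_H in Matrix (Fin 2) (Fin 2) ℝ. Then x₄ ≥ 1 − (2 + √2)·p. In particular, among all such decompositions of the dephased magic state into the stabilizer projectors P₀, P₁, P₊ and the magic projector P_H, the minimal possible weight on P_H is exactly 1 − (2 + √2)·p for 0 ≤ p ≤ (1 − tan(π/8))/2, attained by the decomposition ρ(p) = (1+√2)p·P₀ + p·P₊ + (1−(2+√2)p)·P_H. -/
import Mathlib


open Real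

/-- The stabilizer projector `P₀ = |0⟩⟨0|`. -/
noncomputable def P0 : Matrix (Fin 2) (Fin 2) ℝ := !![1, 0; 0, 0]

/-- The stabilizer projector `P₁ = |1⟩⟨1|`. -/
noncomputable def P1 : Matrix (Fin 2) (Fin 2) ℝ := !![0, 0; 0, 1]

/-- The stabilizer projector `P₊ = |+⟩⟨+|`. -/
noncomputable def Pplus : Matrix (Fin 2) (Fin 2) ℝ := !![1/2, 1/2; 1/2, 1/2]

/-- The magic projector `P_H = |H⟩⟨H|`. -/
noncomputable def PH : Matrix (Fin 2) (Fin 2) ℝ :=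
  !![cos (π/8) ^ 2, cos (π/8) * sin (π/8);
     cos (π/8) * sin (π/8), sin (π/8) ^ 2]

/-- The magic state `|H⟩` after dephasing noise of rate `p`. -/
noncomputable def ρdeph (p : ℝ) : Matrix (Fin 2) (Fin 2) ℝ :=
  !![cos (π/8) ^ 2, (1 - 2*p) * cos (π/8) * sin (π/8);
     (1 - 2*p) * cos (π/8) * sin (π/8), sin (π/8) ^ 2]

theorem stmt_11 (p : ℝ) (x₁ x₂ x₃ x₄ : ℝ)
    (h1 : 0 ≤ x₁) (h2 : 0 ≤ x₂) (h3 : 0 ≤ x₃) (h4 : 0 ≤ x₄)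
    (heq : ρdeph p = x₁ • P0 + x₂ • P1 + x₃ • Pplus + x₄ • PH) :
    x₄ ≥ 1 - (2 + Real.sqrt 2) * p
    ∧ ρdeph p = ((1 + Real.sqrt 2) * p) • P0 + p • Pplus
        + (1 - (2 + Real.sqrt 2) * p) • PH
    ∧ (0 ≤ p → p ≤ (1 - tan (π/8)) / 2 →
        0 ≤ (1 + Real.sqrt 2) * p ∧ 0 ≤ p ∧ 0 ≤ 1 - (2 + Real.sqrt 2) * p) := by
  have s2 : Real.sqrt 2 ^ 2 = 2 := Real.sq_sqrt (by norm_num)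
  have s2nn : (0:ℝ) ≤ Real.sqrt 2 := Real.sqrt_nonneg 2
  have hs1 : 1 < Real.sqrt 2 := by nlinarith
  have hcs : cos (π/8) * sin (π/8) = Real.sqrt 2 / 4 := by
    have h := Real.sin_two_mul (π/8)
    rw [show 2*(π/8) = π/4 by ring, Real.sin_pi_div_four] at h
    linarith
  have hc2 : cos (π/8)^2 = (2 + Real.sqrt 2)/4 := by
    have h := Real.cos_sq (π/8)
    rw [show 2*(π/8) = π/4 by ring, Real.cos_pi_div_four] at h
    rw [h]; ring
  have hs2 : sin (π/8)^2 = (2 - Real.sqrt 2)/4 := by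
    have := Real.sin_sq_add_cos_sq (π/8); linarith
  refine ⟨?_, ?_, ?_⟩
  · have h01 := congr_fun (congr_fun heq 0) 1
    have h11 := congr_fun (congr_fun heq 1) 1
    simp [ρdeph, P0, P1, Pplus, PH, Matrix.add_apply, Matrix.smul_apply, smul_eq_mul,
      -Real.cos_pi_div_eight, -Real.sin_pi_div_eight] at h01 h11
    rw [mul_assoc, hcs] at h01
    rw [hs2] at h11
    have hkey : (2*Real.sqrt 2 - 2)*(x₄ - 1 + (2 + Real.sqrt 2)*p) = 4*x₂ := by
      linear_combination 4*h11 - 4*h01 + 2*p*s2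
    nlinarith [hkey]
  · ext i j
    fin_cases i <;> fin_cases j <;>
      simp [ρdeph, P0, P1, Pplus, PH, Matrix.add_apply, Matrix.smul_apply, smul_eq_mul,
        -Real.cos_pi_div_eight, -Real.sin_pi_div_eight]
    · linear_combination ((2+Real.sqrt 2)*p)*hc2 + (p/4)*s2
    · linear_combination (Real.sqrt 2*p)*hcs + (p/4)*s2
    · linear_combination (Real.sqrt 2*p)*hcs + (p/4)*s2
    · linear_combination ((2+Real.sqrt 2)*p)*hs2 - (p/4)*s2
  · intro hp hpt
    have hcpos : 0 < cos (π/8) := by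
      apply Real.cos_pos_of_mem_Ioo
      constructor <;> nlinarith [Real.pi_pos]
    have hmul : cos (π/8) * sin (π/8) = cos (π/8) * ((Real.sqrt 2 - 1) * cos (π/8)) := by
      rw [hcs]; nlinarith [hc2, s2]
    have htan : Real.tan (π/8) = Real.sqrt 2 - 1 := by
      rw [Real.tan_eq_sin_div_cos, div_eq_iff hcpos.ne']
      exact mul_left_cancel₀ hcpos.ne' hmul
    rw [htan] at hpt
    refine ⟨by nlinarith, hp, by nlinarith⟩
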